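/- Let L be an integral ℓ-monoid, let α be a fuzzy regular expression over a finite alphabet X with associated alphabet Y, and let A = (A, X∪Y, δ^A, a₀, τ^A) be an arbitrary nondeterministic finite automaton recognizing the language ‖α_R‖. Then the least upper bounds defining the fuzzy automaton A_α = (A, X, δ^{A_α}, a₀, τ^{A_α}) associated with A and α exist, so A_α is well defined, and A_α recognizes the fuzzy language ‖α‖, i.e., L(A_α)(u) = ‖α‖(u) for every u ∈ X*. -/

import Mathlib

attribute [local instance] Classical.propDecidable

/-- A lattice-ordered monoid (ℓ-monoid): a lattice with least element `⊥` and greatest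
element `⊤`, together with a monoid structure (multiplication `*`, unit `1`, playing the
role of `e`) such that `⊥` (playing the role of the scalar `0`) is absorbing and
multiplication distributes over binary joins on both sides. -/
class LMonoid (L : Type*) extends Lattice L, BoundedOrder L, Monoid L where
  mul_bot : ∀ x : L, x * ⊥ = ⊥
  bot_mul : ∀ x : L, ⊥ * x = ⊥
  mul_sup : ∀ x y z : L, x * (y ⊔ z) = x * y ⊔ x * z
  sup_mul : ∀ x y z : L, (x ⊔ y) * z = x * z ⊔ y * z

/-- An integral ℓ-monoid: the unit of the multiplication is the top element of the lattice. -/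
class IntegralLMonoid (L : Type*) extends LMonoid L where
  one_eq_top : (1 : L) = ⊤

/-- Fuzzy regular expressions over an alphabet `X` with scalars in `L`. -/
inductive FRE (X L : Type*) where
  | zero : FRE X L
  | eps : FRE X L
  | char : X → FRE X L
  | smul : L → FRE X L → FRE X L
  | plus : FRE X L → FRE X L → FRE X L
  | comp : FRE X L → FRE X L → FRE X L
  | star : FRE X L → FRE X L

/-- The set of scalars of `L` occurring in a fuzzy regular expression. -/
def FRE.scalars {X L : Type*} : FRE X L → Set L
  | .zero => ∅
  | .eps => ∅
  | .char _ => ∅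
  | .smul lam β => insert lam β.scalars
  | .plus β γ => β.scalars ∪ γ.scalars
  | .comp β γ => β.scalars ∪ γ.scalars
  | .star β => β.scalars

noncomputable section

namespace Fz

variable {L : Type*} [IntegralLMonoid L]

/-- Composition of fuzzy relations: `(R ∘ S)(a,b) = ⋁_{c} R(a,c) ⊗ S(c,b)`. -/
def fcomp {A : Type*} [Fintype A] (R S : A → A → L) : A → A → L :=
  fun a b => Finset.univ.sup fun c => R a c * S c b

/-- Composition of a fuzzy relation with a fuzzy set: `(R ∘ f)(a) = ⋁_{b} R(a,b) ⊗ f(b)`. -/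
def fcompf {A : Type*} [Fintype A] (R : A → A → L) (f : A → L) : A → L :=
  fun a => Finset.univ.sup fun b => R a b * f b

/-- Composition of a fuzzy set with a fuzzy relation: `(f ∘ R)(a) = ⋁_{b} f(b) ⊗ R(b,a)`. -/
def fcompfR {A : Type*} [Fintype A] (f : A → L) (R : A → A → L) : A → L :=
  fun a => Finset.univ.sup fun b => f b * R b a

/-- Powers of a fuzzy relation: `R⁰` is the crisp equality and `R^{k+1} = R^k ∘ R`. -/
def rpow {A : Type*} [Fintype A] (R : A → A → L) : ℕ → A → A → L
  | 0 => fun a b => if a = b then 1 else ⊥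
  | k + 1 => fcomp (rpow R k) R

private def dstarAux {A Z : Type*} [Fintype A] (δ : A → Z → A → L) : A → List Z → A → L
  | a, [], b => if a = b then 1 else ⊥
  | a, z :: w, b => Finset.univ.sup fun c => dstarAux δ a w c * δ c z b

/-- The extension of a fuzzy transition relation to words:
`δ(a, ε, b) = 1` if `a = b` and `⊥` otherwise, and
`δ(a, ux, b) = ⋁_{c} δ(a, u, c) ⊗ δ(c, x, b)`. -/
def dstar {A Z : Type*} [Fintype A] (δ : A → Z → A → L) (a : A) (w : List Z) (b : A) : L :=
  dstarAux δ a w.reverse b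

/-- Fuzzy language recognized by a fuzzy automaton with a single crisp initial state `a0`:
`L(A)(u) = ⋁_{b} δ(a0, u, b) ⊗ τ(b)`. -/
def lang {A Z : Type*} [Fintype A] (δ : A → Z → A → L) (a0 : A) (τ : A → L)
    (w : List Z) : L :=
  Finset.univ.sup fun b => dstar δ a0 w b * τ b

/-- Concatenation of fuzzy languages: `(fg)(u) = ⋁_{u = vw} f(v) ⊗ g(w)`
(a finite join over the factorizations of `u`). -/
def fconcat {X : Type*} (f g : List X → L) : List X → L :=
  fun u => (Finset.range (u.length + 1)).sup fun i => f (u.take i) * g (u.drop i)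

/-- Powers of a fuzzy language: `f⁰` is the characteristic function of the empty word,
and `f^{n+1} = fⁿ f`. -/
def fpow {X : Type*} (f : List X → L) : ℕ → List X → L
  | 0 => fun u => if u = [] then 1 else ⊥
  | n + 1 => fconcat (fpow f n) f

/-- `IsNorm α f` asserts that `f` is the fuzzy language `‖α‖` represented by the fuzzy
regular expression `α` (for the star, `‖β*‖(u)` is the least upper bound of the powers,
which is required to exist). -/
inductive IsNorm {X : Type*} : FRE X L → (List X → L) → Prop
  | zero : IsNorm .zero fun _ => ⊥
  | eps : IsNorm .eps fun u => if u = [] then 1 else ⊥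
  | char (x : X) : IsNorm (.char x) fun u => if u = [x] then 1 else ⊥
  | smul (lam : L) {β : FRE X L} {f : List X → L} :
      IsNorm β f → IsNorm (.smul lam β) fun u => lam * f u
  | plus {β γ : FRE X L} {f g : List X → L} :
      IsNorm β f → IsNorm γ g → IsNorm (.plus β γ) fun u => f u ⊔ g u
  | comp {β γ : FRE X L} {f g : List X → L} :
      IsNorm β f → IsNorm γ g → IsNorm (.comp β γ) (fconcat f g)
  | star {β : FRE X L} {f g : List X → L} :
      IsNorm β f → (∀ u, IsLUB {l | ∃ n : ℕ, l = fpow f n u} (g u)) →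
      IsNorm (.star β) g

/-- The ordinary regular expression `α_R` over `X ∪ Y` obtained from a fuzzy regular
expression `α` by replacing each scalar `λ` by the associated letter `λ' = sc λ ∈ Y`. -/
def toReg {X Y : Type*} (sc : L → Y) : FRE X L → RegularExpression (X ⊕ Y)
  | .zero => 0
  | .eps => 1
  | .char x => RegularExpression.char (Sum.inl x)
  | .smul lam β => RegularExpression.char (Sum.inr (sc lam)) * toReg sc β
  | .plus β γ => toReg sc β + toReg sc γ
  | .comp β γ => toReg sc β * toReg sc γ
  | .star β => (toReg sc β).star

/-- `U_Y(u)`: the set of words over `X ∪ Y` from which deleting all letters of `Y`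
yields `u` (the shuffle of `u` with `Y*`). -/
def UY {X : Type*} (Y : Type*) (u : List X) : Set (List (X ⊕ Y)) :=
  {v | v.filterMap (fun z => z.getLeft?) = u}

/-- The homomorphism `φ*_α : (X ∪ Y)* → (L, ⊗, 1)` determined by mapping every letter of
`X` to `1` and every letter `λ' ∈ Y` to the corresponding scalar `λ = φY λ'`. -/
def phiStar {X Y : Type*} (φY : Y → L) (v : List (X ⊕ Y)) : L :=
  (v.map (Sum.elim (fun _ => (1 : L)) φY)).prod

/-- The language `‖α_R‖` of the regular expression `α_R`, viewed as a fuzzy language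
with membership values in `{0, 1} ⊆ L`. -/
def langR {X Y : Type*} (sc : L → Y) (α : FRE X L) (v : List (X ⊕ Y)) : L :=
  if v ∈ (toReg sc α).matches' then 1 else ⊥

/-- The reflexive fuzzy relation `R` on the state set of a nondeterministic automaton over
`X ∪ Y`: `R(a,a) = 1` and, for `a ≠ b`, `R(a,b) = ⋁_{λ' ∈ Y} λ ⊗ δ(a, λ', b)`. -/
def Rstep {X Y A : Type*} [Fintype A] [Fintype Y] (φY : Y → L)
    (δ : A → X ⊕ Y → A → L) : A → A → L :=
  fun a b => if a = b then 1 else Finset.univ.sup fun y : Y => φY y * δ a (Sum.inr y) b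

/-- The fuzzy relation `R_A = Rⁿ`, `n = |A|`: the least transitive fuzzy relation
containing `R`. -/
def RA {X Y A : Type*} [Fintype A] [Fintype Y] (φY : Y → L)
    (δ : A → X ⊕ Y → A → L) : A → A → L :=
  rpow (Rstep φY δ) (Fintype.card A)

/-- The set `{φ*_α(v) ⊗ δ^A(a,v,b) : v ∈ U_Y(x)}` whose least upper bound defines the
transition `δ^{A_α}(a, x, b)` of the fuzzy automaton associated with `A` and `α`. -/
def dset {X Y A : Type*} [Fintype A] (φY : Y → L) (δ : A → X ⊕ Y → A → L)
    (a : A) (x : X) (b : A) : Set L :=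
  {l | ∃ v ∈ UY Y [x], l = phiStar φY v * dstar δ a v b}

/-- The set `{⋁_{b} φ*_α(v) ⊗ δ^A(a,v,b) ⊗ τ(b) : v ∈ Y*}` whose least upper bound defines
the terminal degree `τ^{A_α}(a)` of the fuzzy automaton associated with `A` and `α`. -/
def tset {X Y A : Type*} [Fintype A] (φY : Y → L) (δ : A → X ⊕ Y → A → L)
    (τ : A → L) (a : A) : Set L :=
  {l | ∃ w : List Y, l = Finset.univ.sup fun b =>
    phiStar φY ((w.map Sum.inr : List (X ⊕ Y))) *
      dstar δ a (w.map Sum.inr) b * τ b}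

end Fz

end

namespace Pf
open Fz

variable {L : Type*} [IntegralLMonoid L]

theorem mul_bot' (x : L) : x * ⊥ = ⊥ := LMonoid.mul_bot x
theorem bot_mul' (x : L) : ⊥ * x = ⊥ := LMonoid.bot_mul x
theorem mul_sup' (x y z : L) : x * (y ⊔ z) = x * y ⊔ x * z := LMonoid.mul_sup x y z
theorem sup_mul' (x y z : L) : (x ⊔ y) * z = x * z ⊔ y * z := LMonoid.sup_mul x y z
theorem le_one' (x : L) : x ≤ 1 := IntegralLMonoid.one_eq_top (L := L) ▸ le_top

theorem mul_le_mul_left'' {y z : L} (h : y ≤ z) (x : L) : x * y ≤ x * z := by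
  have : x * (y ⊔ z) = x * y ⊔ x * z := mul_sup' x y z
  rw [sup_eq_right.2 h] at this
  exact le_sup_left.trans this.ge

theorem mul_le_mul_right'' {y z : L} (h : y ≤ z) (x : L) : y * x ≤ z * x := by
  have : (y ⊔ z) * x = y * x ⊔ z * x := sup_mul' y z x
  rw [sup_eq_right.2 h] at this
  exact le_sup_left.trans this.ge

theorem mul_le_mul'' {x y z w : L} (h1 : x ≤ y) (h2 : z ≤ w) : x * z ≤ y * w :=
  (mul_le_mul_left'' h2 x).trans (mul_le_mul_right'' h1 w)

theorem mul_le_left (x y : L) : x * y ≤ x := by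
  simpa using mul_le_mul_left'' (le_one' y) x

theorem mul_le_right (x y : L) : x * y ≤ y := by
  simpa using mul_le_mul_right'' (le_one' x) y

theorem sup_mul_distrib {ι : Type*} (s : Finset ι) (f : ι → L) (x : L) :
    s.sup f * x = s.sup fun i => f i * x := by
  induction s using Finset.cons_induction with
  | empty => simp [bot_mul']
  | cons a s ha ih => simp [Finset.sup_cons, sup_mul', ih]

theorem mul_sup_distrib {ι : Type*} (s : Finset ι) (f : ι → L) (x : L) :
    x * s.sup f = s.sup fun i => x * f i := by
  induction s using Finset.cons_induction with
  | empty => simp [mul_bot']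
  | cons a s ha ih => simp [Finset.sup_cons, mul_sup', ih]

/-- crisp elements -/
def Crisp (l : L) : Prop := l = 1 ∨ l = ⊥

theorem Crisp.sup {x y : L} (hx : Crisp x) (hy : Crisp y) : Crisp (x ⊔ y) := by
  rcases hx with h | h <;> rcases hy with h' | h' <;> subst h h'
  · exact Or.inl (sup_idem 1)
  · exact Or.inl (sup_eq_left.2 bot_le)
  · exact Or.inl (sup_eq_right.2 bot_le)
  · exact Or.inr (sup_idem ⊥)

theorem Crisp.mul {x y : L} (hx : Crisp x) (hy : Crisp y) : Crisp (x * y) := by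
  rcases hx with h | h <;> rcases hy with h' | h' <;> subst h h' <;>
    simp [Crisp, mul_bot', bot_mul']

theorem Crisp.bot : Crisp (⊥ : L) := Or.inr rfl
theorem Crisp.one : Crisp (1 : L) := Or.inl rfl

theorem crisp_finset_sup {ι : Type*} (s : Finset ι) (f : ι → L)
    (h : ∀ i ∈ s, Crisp (f i)) : Crisp (s.sup f) := by
  induction s using Finset.cons_induction with
  | empty => exact Crisp.bot
  | cons a s ha ih =>
    rw [Finset.sup_cons]
    exact (h a (Finset.mem_cons_self a s)).sup (ih fun i hi => h i (Finset.mem_cons.2 (Or.inr hi)))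

theorem mul_crisp_comm {q : L} (hq : Crisp q) (x : L) : x * q = q * x := by
  rcases hq with h | h <;> subst h <;> simp [mul_bot', bot_mul']

section dstar
variable {A Z : Type*} [Fintype A] (δ : A → Z → A → L)

theorem dstar_nil (a b : A) : dstar δ a ([] : List Z) b = if a = b then 1 else ⊥ := rfl

theorem dstar_snoc (a b : A) (w : List Z) (z : Z) :
    dstar δ a (w ++ [z]) b = Finset.univ.sup fun c => dstar δ a w c * δ c z b := by
  simp only [dstar, List.reverse_append, List.reverse_cons, List.reverse_nil,
    List.nil_append, List.cons_append, List.singleton_append]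
  rfl

theorem sup_ite_unit {A : Type*} [Fintype A] (a : A) (h : A → L) :
    (Finset.univ.sup fun b => (if a = b then (1 : L) else ⊥) * h b) = h a := by
  apply le_antisymm
  · exact Finset.sup_le fun b _ => by
      by_cases hab : a = b
      · subst hab; simp
      · simp [hab, bot_mul']
  · simpa using Finset.le_sup (f := fun b => (if a = b then (1:L) else ⊥) * h b)
      (Finset.mem_univ a)

theorem sup_ite_unit' {A : Type*} [Fintype A] (a : A) (h : A → L) :
    (Finset.univ.sup fun b => h b * (if b = a then (1 : L) else ⊥)) = h a := by
  apply le_antisymm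
  · exact Finset.sup_le fun b _ => by
      by_cases hab : b = a
      · subst hab; simp
      · simp [hab, mul_bot']
  · simpa using Finset.le_sup (f := fun b => h b * (if b = a then (1:L) else ⊥))
      (Finset.mem_univ a)

theorem dstar_append (a b : A) (u v : List Z) :
    dstar δ a (u ++ v) b = Finset.univ.sup fun c => dstar δ a u c * dstar δ c v b := by
  induction v using List.reverseRecOn generalizing b with
  | nil =>
    simp only [List.append_nil]
    rw [show (fun c => dstar δ a u c * dstar δ c ([] : List Z) b)
        = fun c => dstar δ a u c * (if c = b then 1 else ⊥) from rfl, sup_ite_unit']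
  | append_singleton v z ih =>
    rw [← List.append_assoc, dstar_snoc]
    simp only [dstar_snoc, ih]
    simp only [sup_mul_distrib, mul_sup_distrib, mul_assoc]
    exact Finset.sup_comm _ _ _

theorem dstar_cons (a b : A) (z : Z) (w : List Z) :
    dstar δ a (z :: w) b = Finset.univ.sup fun c => δ a z c * dstar δ c w b := by
  have : (z :: w) = [z] ++ w := rfl
  rw [this, dstar_append]
  congr 1; funext c
  congr 1
  have : ([z] : List Z) = [] ++ [z] := rfl
  rw [this, dstar_snoc]
  simp only [dstar_nil]
  exact sup_ite_unit a fun c' => δ c' z c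

theorem dstar_crisp (hδ : ∀ a z b, Crisp (δ a z b)) (a b : A) (w : List Z) :
    Crisp (dstar δ a w b) := by
  induction w using List.reverseRecOn generalizing b with
  | nil => rw [dstar_nil]; by_cases h : a = b <;> simp [h, Crisp.one, Crisp.bot]
  | append_singleton w z ih =>
    rw [dstar_snoc]
    exact crisp_finset_sup _ _ fun c _ => (ih c).mul (hδ c z b)

end dstar
end Pf
namespace Pf
open Fz

variable {L : Type*} [IntegralLMonoid L]

set_option linter.unusedSectionVars false
set_option linter.unusedVariables false

section runs
variable {A Z : Type*} [Fintype A]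

/-- A run of a crisp automaton: `s` is the list of states visited after each step. -/
inductive RunL (δ : A → Z → A → L) : A → List Z → List A → A → Prop
  | nil (a : A) : RunL δ a [] [] a
  | cons {a c b : A} {z : Z} {w : List Z} {s : List A} :
      δ a z c = 1 → RunL δ c w s b → RunL δ a (z :: w) (c :: s) b

variable {δ : A → Z → A → L}

theorem RunL.length {a b : A} {w : List Z} {s : List A} (h : RunL δ a w s b) :
    s.length = w.length := by
  induction h with
  | nil => rfl
  | cons _ _ ih => simpa using ih

theorem RunL.dstar_eq_one {a b : A} {w : List Z} {s : List A} (h : RunL δ a w s b) :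
    dstar δ a w b = 1 := by
  induction h with
  | nil a => simp [dstar_nil]
  | @cons a c b z w s hz hr ih =>
    refine le_antisymm (le_one' _) ?_
    rw [dstar_cons]
    calc (1 : L) = δ a z c * dstar δ c w b := by rw [hz, ih, one_mul]
    _ ≤ _ := Finset.le_sup (f := fun c => δ a z c * dstar δ c w b) (Finset.mem_univ c)

theorem RunL.append {a c b : A} {w₁ w₂ : List Z} {s₁ s₂ : List A}
    (h₁ : RunL δ a w₁ s₁ c) (h₂ : RunL δ c w₂ s₂ b) :
    RunL δ a (w₁ ++ w₂) (s₁ ++ s₂) b := by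
  induction h₁ with
  | nil => simpa
  | cons hz hr ih => exact RunL.cons hz (ih h₂)

theorem runL_extract (hδ : ∀ a z b, Crisp (δ a z b)) (hnt : (1 : L) ≠ ⊥) :
    ∀ (w : List Z) (a b : A), dstar δ a w b = 1 → ∃ s, RunL δ a w s b := by
  intro w
  induction w with
  | nil =>
    intro a b h
    rw [dstar_nil] at h
    by_cases hab : a = b
    · subst hab; exact ⟨[], RunL.nil a⟩
    · rw [if_neg hab] at h; exact absurd h.symm hnt
  | cons z w ih =>
    intro a b h
    rw [dstar_cons] at h
    by_cases hc : ∃ c, δ a z c = 1 ∧ dstar δ c w b = 1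
    · obtain ⟨c, h1, h2⟩ := hc
      obtain ⟨s, hs⟩ := ih c b h2
      exact ⟨c :: s, RunL.cons h1 hs⟩
    · push_neg at hc
      exfalso
      apply hnt
      rw [← h]
      refine le_antisymm (Finset.sup_le fun c _ => ?_) bot_le
      rcases hδ a z c with h1 | h1
      · rcases dstar_crisp δ hδ c b w with h2 | h2
        · exact absurd h2 (hc c h1)
        · rw [h2, mul_bot']
      · rw [h1, bot_mul']

/-- split a run according to a split of its state list -/
theorem runL_split {b : A} {s₁ s₂ : List A} :
    ∀ {w : List Z} {a : A}, RunL δ a w (s₁ ++ s₂) b →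
    ∃ w₁ w₂, w = w₁ ++ w₂ ∧ w₁.length = s₁.length ∧
      RunL δ a w₁ s₁ (s₁.getLastD a) ∧ RunL δ (s₁.getLastD a) w₂ s₂ b := by
  induction s₁ with
  | nil =>
    intro w a h
    exact ⟨[], w, rfl, rfl, RunL.nil a, by simpa using h⟩
  | cons c s₁ ih =>
    intro w a h
    rcases h with _ | @⟨_, _, _, z, w', _, hz, hr⟩
    obtain ⟨w₁, w₂, rfl, hlen, h1, h2⟩ := ih hr
    refine ⟨z :: w₁, w₂, rfl, by simpa using hlen, ?_, ?_⟩
    · have e : (c :: s₁).getLastD a = s₁.getLastD c := List.getLastD_cons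
      rw [e]
      exact RunL.cons hz h1
    · have e : (c :: s₁).getLastD a = s₁.getLastD c := List.getLastD_cons
      rw [e]
      exact h2

/-- a list longer than the cardinality has a duplicated element -/
theorem exists_dup_split {A : Type*} [Fintype A] :
    ∀ (l : List A), Fintype.card A < l.length →
    ∃ (t₁ : List A) (c : A) (t₂ t₃ : List A), l = t₁ ++ c :: t₂ ++ c :: t₃ := by
  have key : ∀ (l : List A), ¬ l.Nodup → ∃ (t₁ : List A) (c : A) (t₂ t₃ : List A), l = t₁ ++ c :: t₂ ++ c :: t₃ := by
    intro l
    induction l with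
    | nil => intro h; exact absurd List.nodup_nil h
    | cons c l ih =>
      intro h
      rw [List.nodup_cons] at h
      push_neg at h
      by_cases hmem : c ∈ l
      · obtain ⟨t₂, t₃, rfl⟩ := List.append_of_mem hmem
        exact ⟨[], c, t₂, t₃, rfl⟩
      · obtain ⟨t₁, d, t₂, t₃, rfl⟩ := ih (h hmem)
        exact ⟨c :: t₁, d, t₂, t₃, rfl⟩
  intro l hl
  apply key
  intro hnd
  exact absurd (List.Nodup.length_le_card hnd) (not_le.2 hl)

/-- Loop removal: a long run can be shortened, splitting the word into three pieces
with the middle piece nonempty. -/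
theorem runL_shorten {a b : A} {w : List Z} {s : List A}
    (h : RunL δ a w s b) (hlen : Fintype.card A < w.length + 1) :
    ∃ w₁ w₂ w₃ s', w = w₁ ++ w₂ ++ w₃ ∧ w₂ ≠ [] ∧ RunL δ a (w₁ ++ w₃) s' b := by
  have hdup : ∃ (t₁ : List A) (c : A) (t₂ t₃ : List A), a :: s = t₁ ++ c :: t₂ ++ c :: t₃ := by
    apply exists_dup_split
    rw [List.length_cons, h.length]
    exact hlen
  obtain ⟨t₁, c, t₂, t₃, hsplit⟩ := hdup
  match t₁, hsplit with
  | [], hsplit =>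
    rw [List.nil_append, List.cons_append] at hsplit
    have hac : a = c := (List.cons_eq_cons.1 hsplit).1
    subst hac
    have hs0 := (List.cons_eq_cons.1 hsplit).2
    have hs : s = (t₂ ++ [a]) ++ t₃ := by rw [hs0]; simp
    rw [hs] at h
    obtain ⟨w₁, w₂, rfl, hl1, hr1, hr2⟩ := runL_split h
    have hlast : (t₂ ++ [a]).getLastD a = a := List.getLastD_concat
    rw [hlast] at hr2
    refine ⟨[], w₁, w₂, t₃, by simp, ?_, by simpa using hr2⟩
    intro hw
    subst hw
    simp at hl1
  | a' :: t₁, hsplit =>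
    rw [List.cons_append] at hsplit
    have hs := (List.cons_eq_cons.1 hsplit).2
    have hs' : s = (t₁ ++ [c]) ++ ((t₂ ++ [c]) ++ t₃) := by rw [hs]; simp
    rw [hs'] at h
    obtain ⟨w₁, wrest, rfl, hl1, hr1, hr2⟩ := runL_split h
    have hlast1 : (t₁ ++ [c]).getLastD a = c := List.getLastD_concat
    rw [hlast1] at hr1 hr2
    obtain ⟨w₂, w₃, rfl, hl2, hr3, hr4⟩ := runL_split hr2
    have hlast2 : (t₂ ++ [c]).getLastD c = c := List.getLastD_concat
    rw [hlast2] at hr4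
    refine ⟨w₁, w₂, w₃, _, (List.append_assoc w₁ w₂ w₃).symm, ?_, hr1.append hr4⟩
    intro hw
    subst hw
    simp at hl2
end runs
end Pf
namespace Pf
open Fz Sum

variable {L : Type*} [IntegralLMonoid L]

set_option linter.unusedSectionVars false

section phi
variable {X Y : Type*} (φY : Y → L)

theorem phiStar_nil : phiStar φY ([] : List (X ⊕ Y)) = 1 := rfl

theorem phiStar_append (v₁ v₂ : List (X ⊕ Y)) :
    phiStar φY (v₁ ++ v₂) = phiStar φY v₁ * phiStar φY v₂ := by
  simp [phiStar]

theorem phiStar_cons_inl (x : X) (v : List (X ⊕ Y)) :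
    phiStar φY (inl x :: v) = phiStar φY v := by
  simp [phiStar]

theorem phiStar_cons_inr (y : Y) (v : List (X ⊕ Y)) :
    phiStar φY (inr y :: v) = φY y * phiStar φY v := by
  simp [phiStar]

theorem phiStar_le_one (v : List (X ⊕ Y)) : phiStar φY v ≤ 1 := by
  induction v with
  | nil => exact le_one' _
  | cons z v ih =>
    rcases z with x | y
    · rw [phiStar_cons_inl]; exact ih
    · rw [phiStar_cons_inr]
      calc φY y * phiStar φY v ≤ φY y * 1 := mul_le_mul_left'' ih _
      _ ≤ 1 := by rw [mul_one]; exact le_one' _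

theorem mem_UY_iff {u : List X} {v : List (X ⊕ Y)} :
    v ∈ UY Y u ↔ v.filterMap (fun z => z.getLeft?) = u := Iff.rfl

theorem map_inr_mem_UY_nil (w : List Y) : (w.map inr : List (X ⊕ Y)) ∈ UY Y ([] : List X) := by
  rw [mem_UY_iff, List.filterMap_map]
  simp [Function.comp]

theorem mem_UY_nil_iff {v : List (X ⊕ Y)} :
    v ∈ UY Y ([] : List X) ↔ ∃ w : List Y, v = w.map inr := by
  constructor
  · intro h
    rw [mem_UY_iff] at h
    induction v with
    | nil => exact ⟨[], rfl⟩
    | cons z v ih =>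
      rcases z with x | y
      · simp at h
      · rw [List.filterMap_cons] at h
        simp only [getLeft?_inr] at h
        obtain ⟨w, rfl⟩ := ih h
        exact ⟨y :: w, rfl⟩
  · rintro ⟨w, rfl⟩
    exact map_inr_mem_UY_nil w

theorem mem_UY_append {u₁ u₂ : List X} {v₁ v₂ : List (X ⊕ Y)}
    (h₁ : v₁ ∈ UY Y u₁) (h₂ : v₂ ∈ UY Y u₂) : v₁ ++ v₂ ∈ UY Y (u₁ ++ u₂) := by
  rw [mem_UY_iff] at *
  rw [List.filterMap_append, h₁, h₂]

theorem mem_UY_append_nil_iff {u : List X} {v₁ v₂ : List (X ⊕ Y)} (h₁ : v₁ ∈ UY Y ([] : List X)) :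
    (v₁ ++ v₂ ∈ UY Y u) ↔ v₂ ∈ UY Y u := by
  rw [mem_UY_iff, mem_UY_iff, List.filterMap_append, mem_UY_iff.1 h₁, List.nil_append]

theorem mem_UY_cons_decomp {x : X} {u : List X} {v : List (X ⊕ Y)} (h : v ∈ UY Y (x :: u)) :
    ∃ (w : List Y) (v' : List (X ⊕ Y)),
      v = (w.map inr : List (X ⊕ Y)) ++ inl x :: v' ∧ v' ∈ UY Y u := by
  rw [mem_UY_iff] at h
  induction v with
  | nil => simp at h
  | cons z v ih =>
    rcases z with x' | y
    · rw [List.filterMap_cons] at h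
      simp only [getLeft?_inl] at h
      rw [List.cons_eq_cons] at h
      obtain ⟨rfl, hv⟩ := h
      exact ⟨[], v, by simp, hv⟩
    · rw [List.filterMap_cons] at h
      simp only [getLeft?_inr] at h
      obtain ⟨w, v', rfl, hv'⟩ := ih h
      exact ⟨y :: w, v', by simp, hv'⟩

theorem mem_UY_singleton_decomp {x : X} {v : List (X ⊕ Y)} (h : v ∈ UY Y [x]) :
    ∃ (v₁ v₂ : List (X ⊕ Y)), v = v₁ ++ inl x :: v₂ ∧
      v₁ ∈ UY Y ([] : List X) ∧ v₂ ∈ UY Y ([] : List X) := by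
  obtain ⟨w, v', rfl, hv'⟩ := mem_UY_cons_decomp h
  exact ⟨w.map inr, v', rfl, map_inr_mem_UY_nil w, hv'⟩

theorem mem_UY_nil_append {v₁ v₂ : List (X ⊕ Y)} (h : v₁ ++ v₂ ∈ UY Y ([] : List X)) :
    v₁ ∈ UY Y ([] : List X) ∧ v₂ ∈ UY Y ([] : List X) := by
  rw [mem_UY_iff, List.filterMap_append, List.append_eq_nil_iff] at h
  exact ⟨h.1, h.2⟩

end phi

section tlub
variable {X Y A : Type*} [Fintype X] [Fintype Y] [Fintype A]
variable (φY : Y → L) (δ : A → X ⊕ Y → A → L)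

/-- the value of a pure-`Y` word `v` between states `a` and `c` -/
noncomputable def Tval (a c : A) (v : List (X ⊕ Y)) : L := phiStar φY v * dstar δ a v c

/-- the set of values of pure-`Y` words between states `a` and `c` -/
def TsetP (a c : A) : Set L := {l | ∃ v ∈ UY Y ([] : List X), l = Tval φY δ a c v}

/-- the candidate LUB: the finite join over short pure-`Y` words -/
noncomputable def Tlub (a c : A) : L :=
  (Finset.range (Fintype.card A + 1)).sup fun k =>
    (Finset.univ : Finset (Fin k → X ⊕ Y)).sup fun p =>
      if List.ofFn p ∈ UY Y ([] : List X) then Tval φY δ a c (List.ofFn p) else ⊥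

variable {φY : Y → L} {δ : A → X ⊕ Y → A → L}

theorem Tval_short_le (a c : A) (v : List (X ⊕ Y)) (hlen : v.length ≤ Fintype.card A)
    (hv : v ∈ UY Y ([] : List X)) : Tval φY δ a c v ≤ Tlub φY δ a c := by
  have h1 : (if List.ofFn v.get ∈ UY Y ([] : List X) then Tval φY δ a c (List.ofFn v.get) else ⊥)
      ≤ (Finset.univ : Finset (Fin v.length → X ⊕ Y)).sup fun p =>
          if List.ofFn p ∈ UY Y ([] : List X) then Tval φY δ a c (List.ofFn p) else ⊥ :=
    Finset.le_sup (f := fun p : Fin v.length → X ⊕ Y =>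
      if List.ofFn p ∈ UY Y ([] : List X) then Tval φY δ a c (List.ofFn p) else ⊥)
      (Finset.mem_univ v.get)
  rw [List.ofFn_get, if_pos hv] at h1
  exact h1.trans (Finset.le_sup (f := fun k =>
    (Finset.univ : Finset (Fin k → X ⊕ Y)).sup fun p =>
      if List.ofFn p ∈ UY Y ([] : List X) then Tval φY δ a c (List.ofFn p) else ⊥)
    (Finset.mem_range.2 (Nat.lt_succ_of_le hlen)))

theorem Tval_le_Tlub (hδ : ∀ a z b, Crisp (δ a z b)) (hnt : (1 : L) ≠ ⊥) (a c : A) :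
    ∀ v ∈ UY Y ([] : List X), Tval φY δ a c v ≤ Tlub φY δ a c := by
  suffices h : ∀ (n : ℕ) (v : List (X ⊕ Y)), v.length ≤ n → v ∈ UY Y ([] : List X) →
      Tval φY δ a c v ≤ Tlub φY δ a c from fun v hv => h v.length v le_rfl hv
  intro n
  induction n with
  | zero =>
    intro v hn hv
    exact Tval_short_le a c v (le_trans hn (Nat.zero_le _)) hv
  | succ n ih0 =>
  intro v hn hv
  have ih : ∀ v' : List (X ⊕ Y), v'.length < v.length → v' ∈ UY Y ([] : List X) →
      Tval φY δ a c v' ≤ Tlub φY δ a c := fun v' h1 h2 => ih0 v' (by omega) h2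
  by_cases hlen : v.length ≤ Fintype.card A
  · exact Tval_short_le a c v hlen hv
  · push_neg at hlen
    rcases dstar_crisp δ hδ a c v with hd | hd
    · -- the word is accepted: extract a run and shorten it
      obtain ⟨s, hs⟩ := runL_extract hδ hnt v a c hd
      obtain ⟨v₁, v₂, v₃, s', hveq, hv₂, hrun⟩ :=
        runL_shorten hs (lt_of_lt_of_le hlen (Nat.le_succ _))
      subst hveq
      have h13 : v₁ ++ v₃ ∈ UY Y ([] : List X) := by
        obtain ⟨ha, hb⟩ := mem_UY_nil_append (v₁ := v₁ ++ v₂) (v₂ := v₃) (by simpa using hv)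
        obtain ⟨ha1, ha2⟩ := mem_UY_nil_append ha
        exact mem_UY_append (u₁ := []) (u₂ := []) ha1 hb
      have hval : Tval φY δ a c (v₁ ++ v₂ ++ v₃) ≤ Tval φY δ a c (v₁ ++ v₃) := by
        rw [Tval, Tval, hd, mul_one, hrun.dstar_eq_one, mul_one]
        rw [phiStar_append, phiStar_append, phiStar_append]
        apply mul_le_mul_right''
        calc phiStar φY v₁ * phiStar φY v₂ ≤ phiStar φY v₁ * 1 :=
          mul_le_mul_left'' (phiStar_le_one φY v₂) _
        _ = phiStar φY v₁ := mul_one _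
      refine hval.trans (ih (v₁ ++ v₃) ?_ h13)
      have : 1 ≤ v₂.length := Nat.one_le_iff_ne_zero.2 (by simpa using hv₂)
      simp only [List.length_append]
      omega
    · rw [Tval, hd, mul_bot']
      exact bot_le

theorem Tlub_le (a c : A) {m : L} (hm : ∀ l ∈ TsetP φY δ a c, l ≤ m) :
    Tlub φY δ a c ≤ m := by
  refine Finset.sup_le fun k _ => Finset.sup_le fun p _ => ?_
  by_cases h : List.ofFn p ∈ UY Y ([] : List X)
  · rw [if_pos h]
    exact hm _ ⟨List.ofFn p, h, rfl⟩
  · rw [if_neg h]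
    exact bot_le

theorem isLUB_TsetP (hδ : ∀ a z b, Crisp (δ a z b)) (hnt : (1 : L) ≠ ⊥) (a c : A) :
    IsLUB (TsetP φY δ a c) (Tlub φY δ a c) := by
  constructor
  · rintro l ⟨v, hv, rfl⟩
    exact Tval_le_Tlub hδ hnt a c v hv
  · intro m hm
    exact Tlub_le a c hm

end tlub
end Pf
namespace Pf
open Fz Sum

variable {L : Type*} [IntegralLMonoid L]

set_option linter.unusedSectionVars false

theorem rearr {p1 p2 D1 e D2 : L} (h1 : Crisp D1) (he : Crisp e) :
    (p1 * p2) * (D1 * (e * D2)) = ((p1 * D1) * e) * (p2 * D2) := by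
  rcases h1 with h | h <;> rcases he with h' | h' <;> subst h h' <;>
    simp [mul_bot', bot_mul', mul_assoc]

section dlub
variable {X Y A : Type*} [Fintype X] [Fintype Y] [Fintype A]
variable (φY : Y → L) (δ : A → X ⊕ Y → A → L) (τ : A → L)

/-- the candidate transition relation of the associated fuzzy automaton -/
noncomputable def Dlub (a : A) (x : X) (b : A) : L :=
  Finset.univ.sup fun c => Finset.univ.sup fun d =>
    Tlub φY δ a c * δ c (Sum.inl x) d * Tlub φY δ d b

/-- the candidate terminal fuzzy set of the associated fuzzy automaton -/
noncomputable def taulub (a : A) : L :=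
  Finset.univ.sup fun b => Tlub φY δ a b * τ b

variable {φY : Y → L} {δ : A → X ⊕ Y → A → L} {τ : A → L}

theorem cons_inl_mem_UY {x : X} {u : List X} {v : List (X ⊕ Y)} (h : v ∈ UY Y u) :
    (inl x :: v) ∈ UY Y (x :: u) := by
  rw [mem_UY_iff] at h ⊢
  rw [List.filterMap_cons]
  simp [h]

theorem dval_expand (hδ : ∀ a z b, Crisp (δ a z b)) (a b : A) (x : X)
    (v₁ v₂ : List (X ⊕ Y)) :
    phiStar φY (v₁ ++ inl x :: v₂) * dstar δ a (v₁ ++ inl x :: v₂) b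
      = Finset.univ.sup fun c => Finset.univ.sup fun d =>
          Tval φY δ a c v₁ * δ c (Sum.inl x) d * Tval φY δ d b v₂ := by
  rw [dstar_append, phiStar_append, phiStar_cons_inl]
  simp only [dstar_cons]
  rw [mul_sup_distrib]
  congr 1; funext c
  rw [mul_sup_distrib, mul_sup_distrib]
  congr 1; funext d
  exact rearr (dstar_crisp δ hδ a c v₁) (hδ c (Sum.inl x) d)

theorem isLUB_dset (hδ : ∀ a z b, Crisp (δ a z b)) (hnt : (1 : L) ≠ ⊥) (a : A) (x : X) (b : A) :
    IsLUB (dset φY δ a x b) (Dlub φY δ a x b) := by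
  constructor
  · rintro l ⟨v, hv, rfl⟩
    obtain ⟨v₁, v₂, rfl, h1, h2⟩ := mem_UY_singleton_decomp hv
    rw [dval_expand hδ]
    refine Finset.sup_le fun c _ => Finset.sup_le fun d _ => ?_
    calc Tval φY δ a c v₁ * δ c (Sum.inl x) d * Tval φY δ d b v₂
        ≤ Tlub φY δ a c * δ c (Sum.inl x) d * Tlub φY δ d b :=
          mul_le_mul'' (mul_le_mul_right'' (Tval_le_Tlub hδ hnt a c v₁ h1) _)
            (Tval_le_Tlub hδ hnt d b v₂ h2)
    _ ≤ Finset.univ.sup fun d => Tlub φY δ a c * δ c (Sum.inl x) d * Tlub φY δ d b :=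
          Finset.le_sup (f := fun d => Tlub φY δ a c * δ c (Sum.inl x) d * Tlub φY δ d b)
            (Finset.mem_univ d)
    _ ≤ Dlub φY δ a x b := Finset.le_sup (f := fun c => Finset.univ.sup fun d =>
          Tlub φY δ a c * δ c (Sum.inl x) d * Tlub φY δ d b) (Finset.mem_univ c)
  · intro m hm
    refine Finset.sup_le fun c _ => Finset.sup_le fun d _ => ?_
    rw [Tlub, sup_mul_distrib, sup_mul_distrib]
    refine Finset.sup_le fun k _ => ?_
    rw [sup_mul_distrib, sup_mul_distrib]
    refine Finset.sup_le fun p _ => ?_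
    by_cases hp : List.ofFn p ∈ UY Y ([] : List X)
    · rw [if_pos hp]
      rw [Tlub, mul_sup_distrib]
      refine Finset.sup_le fun k' _ => ?_
      rw [mul_sup_distrib]
      refine Finset.sup_le fun p' _ => ?_
      by_cases hp' : List.ofFn p' ∈ UY Y ([] : List X)
      · rw [if_pos hp']
        set v₁ := List.ofFn p
        set v₂ := List.ofFn p'
        have hmem : v₁ ++ inl x :: v₂ ∈ UY Y [x] :=
          mem_UY_append (u₁ := []) (u₂ := [x]) hp (cons_inl_mem_UY hp')
        have helem : phiStar φY (v₁ ++ inl x :: v₂) * dstar δ a (v₁ ++ inl x :: v₂) b ≤ m :=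
          hm ⟨v₁ ++ inl x :: v₂, hmem, rfl⟩
        rw [dval_expand hδ] at helem
        exact le_trans (le_trans (Finset.le_sup (f := fun d =>
            Tval φY δ a c v₁ * δ c (Sum.inl x) d * Tval φY δ d b v₂) (Finset.mem_univ d))
          (Finset.le_sup (f := fun c => Finset.univ.sup fun d =>
            Tval φY δ a c v₁ * δ c (Sum.inl x) d * Tval φY δ d b v₂) (Finset.mem_univ c))) helem
      · rw [if_neg hp', mul_bot']
        exact bot_le
    · rw [if_neg hp, bot_mul', bot_mul']
      exact bot_le

theorem isLUB_tset (hδ : ∀ a z b, Crisp (δ a z b)) (hnt : (1 : L) ≠ ⊥) (a : A) :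
    IsLUB (tset φY δ τ a) (taulub φY δ τ a) := by
  constructor
  · rintro l ⟨w, rfl⟩
    refine Finset.sup_le fun b _ => ?_
    calc phiStar φY (w.map Sum.inr) * dstar δ a (w.map Sum.inr) b * τ b
        ≤ Tlub φY δ a b * τ b :=
          mul_le_mul_right'' (Tval_le_Tlub hδ hnt a b _ (map_inr_mem_UY_nil w)) _
    _ ≤ taulub φY δ τ a := Finset.le_sup (f := fun b => Tlub φY δ a b * τ b) (Finset.mem_univ b)
  · intro m hm
    refine Finset.sup_le fun b _ => ?_
    rw [Tlub, sup_mul_distrib]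
    refine Finset.sup_le fun k _ => ?_
    rw [sup_mul_distrib]
    refine Finset.sup_le fun p _ => ?_
    by_cases hp : List.ofFn p ∈ UY Y ([] : List X)
    · rw [if_pos hp]
      obtain ⟨w, hw⟩ := mem_UY_nil_iff.1 hp
      have helem : (Finset.univ.sup fun b => phiStar φY (w.map Sum.inr) *
          dstar δ a (w.map Sum.inr) b * τ b) ≤ m := hm ⟨w, rfl⟩
      refine le_trans ?_ helem
      rw [Tval, hw]
      exact Finset.le_sup (f := fun b => phiStar φY (w.map Sum.inr) *
        dstar δ a (w.map Sum.inr) b * τ b) (Finset.mem_univ b)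
    · rw [if_neg hp, bot_mul']
      exact bot_le

end dlub
end Pf
namespace Pf
open Fz Sum

variable {L : Type*} [IntegralLMonoid L]

set_option linter.unusedSectionVars false

section fpowfin
variable {X : Type*}

theorem fpow_le (f : List X → L) :
    ∀ (n : ℕ) (u : List X),
      fpow f n u ≤ (Finset.range (u.length + 1)).sup fun k => fpow f k u := by
  intro n
  induction n with
  | zero =>
    intro u
    exact Finset.le_sup (f := fun k => fpow f k u) (Finset.mem_range.2 (Nat.succ_pos _))
  | succ n ih =>
    intro u
    show fconcat (fpow f n) f u ≤ _
    refine Finset.sup_le fun i hi => ?_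
    have hi' : i ≤ u.length := Nat.lt_succ_iff.1 (Finset.mem_range.1 hi)
    rcases eq_or_lt_of_le hi' with heq | hlt
    · subst heq
      have h1 : u.take u.length = u := List.take_length
      have h2 : u.drop u.length = [] := List.drop_length
      rw [h1, h2]
      calc fpow f n u * f [] ≤ fpow f n u * 1 := mul_le_mul_left'' (le_one' _) _
      _ = fpow f n u := mul_one _
      _ ≤ _ := ih u
    · calc fpow f n (u.take i) * f (u.drop i)
          ≤ ((Finset.range ((u.take i).length + 1)).sup fun k => fpow f k (u.take i))
              * f (u.drop i) := mul_le_mul_right'' (ih (u.take i)) _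
      _ = (Finset.range ((u.take i).length + 1)).sup fun k => fpow f k (u.take i) * f (u.drop i) :=
          sup_mul_distrib _ _ _
      _ ≤ _ := by
          refine Finset.sup_le fun k hk => ?_
          have hk' : k ≤ i := by
            have := Nat.lt_succ_iff.1 (Finset.mem_range.1 hk)
            rwa [List.length_take, min_eq_left hi'] at this
          have hterm : fpow f k (u.take i) * f (u.drop i) ≤ fpow f (k + 1) u :=
            Finset.le_sup (f := fun j => fpow f k (u.take j) * f (u.drop j)) hi
          refine hterm.trans (Finset.le_sup (f := fun k => fpow f k u) ?_)
          exact Finset.mem_range.2 (by omega)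

theorem isLUB_fpow_finite (f : List X → L) (u : List X) :
    IsLUB {l : L | ∃ n : ℕ, l = fpow f n u}
      ((Finset.range (u.length + 1)).sup fun k => fpow f k u) := by
  constructor
  · rintro l ⟨n, rfl⟩
    exact fpow_le f n u
  · intro m hm
    exact Finset.sup_le fun k _ => hm ⟨k, rfl⟩

end fpowfin

section finrep
variable {X Y : Type*} {φY : Y → L}

theorem cons_inr_mem_UY {y : Y} {u : List X} {v : List (X ⊕ Y)} (h : v ∈ UY Y u) :
    (inr y :: v) ∈ UY Y u := by
  rw [mem_UY_iff] at h ⊢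
  rw [List.filterMap_cons]
  simpa using h

theorem finrep_fconcat {f g : List X → L} {P Q : List (X ⊕ Y) → Prop}
    (hf : ∀ w, ∃ V : Finset (List (X ⊕ Y)),
      (∀ v ∈ V, v ∈ UY Y w ∧ P v) ∧ f w = V.sup (phiStar φY))
    (hg : ∀ w, ∃ V : Finset (List (X ⊕ Y)),
      (∀ v ∈ V, v ∈ UY Y w ∧ Q v) ∧ g w = V.sup (phiStar φY))
    (u : List X) :
    ∃ V : Finset (List (X ⊕ Y)),
      (∀ v ∈ V, v ∈ UY Y u ∧ ∃ v₁ v₂, v = v₁ ++ v₂ ∧ P v₁ ∧ Q v₂) ∧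
      fconcat f g u = V.sup (phiStar φY) := by
  choose Vf hVf hfeq using hf
  choose Vg hVg hgeq using hg
  refine ⟨(Finset.range (u.length + 1)).biUnion fun i =>
      (Vf (u.take i) ×ˢ Vg (u.drop i)).image fun pq => pq.1 ++ pq.2, ?_, ?_⟩
  · intro v hv
    simp only [Finset.mem_biUnion, Finset.mem_image, Finset.mem_product] at hv
    obtain ⟨i, hi, ⟨v₁, v₂⟩, ⟨h1, h2⟩, rfl⟩ := hv
    obtain ⟨hu1, hp1⟩ := hVf _ _ h1
    obtain ⟨hu2, hp2⟩ := hVg _ _ h2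
    refine ⟨?_, v₁, v₂, rfl, hp1, hp2⟩
    have := mem_UY_append hu1 hu2
    rwa [List.take_append_drop] at this
  · rw [fconcat, Finset.sup_biUnion]
    congr 1; funext i
    rw [hfeq, hgeq, sup_mul_distrib, Finset.sup_image, Finset.sup_product_left]
    congr 1; funext v₁
    rw [mul_sup_distrib]
    congr 1; funext v₂
    simp [Function.comp, phiStar_append]

end finrep
end Pf
namespace Pf
open Fz Sum Computability

variable {L : Type*} [IntegralLMonoid L]

set_option linter.unusedSectionVars false
set_option maxHeartbeats 1000000

section thm1
variable {X Y : Type*} {sc : L → Y} {φY : Y → L}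

theorem kstar_append {l : Language (X ⊕ Y)} {p q : List (X ⊕ Y)}
    (hp : p ∈ l∗) (hq : q ∈ l) : p ++ q ∈ l∗ := by
  obtain ⟨S, rfl, hS⟩ := Language.mem_kstar.1 hp
  have : S.flatten ++ q = (S ++ [q]).flatten := by simp
  rw [this]
  refine Language.mem_kstar.2 ⟨S ++ [q], rfl, ?_⟩
  intro y hy
  rcases List.mem_append.1 hy with h | h
  · exact hS y h
  · rw [List.mem_singleton.1 h]; exact hq

theorem thm1 {K : Set L} (hφY : ∀ l ∈ K, φY (sc l) = l)
    {β : FRE X L} {f : List X → L} (h : IsNorm β f) :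
    FRE.scalars β ⊆ K →
    ((∀ (u : List X) (v : List (X ⊕ Y)), v ∈ UY Y u →
        phiStar φY v * langR sc β v ≤ f u) ∧
    (∀ u : List X, ∃ V : Finset (List (X ⊕ Y)),
        (∀ v ∈ V, v ∈ UY Y u ∧ v ∈ (toReg sc β).matches') ∧
        f u = V.sup (phiStar φY))) := by
  induction h with
  | zero =>
    intro _
    constructor
    · intro u v hv
      have : v ∉ (toReg sc (FRE.zero : FRE X L)).matches' := by
        rw [show toReg sc (FRE.zero : FRE X L) = 0 from rfl, RegularExpression.matches'_zero]
        exact Language.notMem_zero v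
      calc phiStar φY v * langR sc (FRE.zero : FRE X L) v = ⊥ := by
            rw [langR, if_neg this, mul_bot']
      _ ≤ _ := bot_le
    · intro u
      refine ⟨∅, by simp, ?_⟩
      show (⊥ : L) = Finset.sup ∅ (phiStar φY)
      simp
  | eps =>
    intro _
    constructor
    · intro u v hv
      by_cases hm : v ∈ (toReg sc (FRE.eps : FRE X L)).matches'
      · have hv0 : v = [] := by
          rw [show toReg sc (FRE.eps : FRE X L) = 1 from rfl,
            RegularExpression.matches'_epsilon, Language.mem_one] at hm
          exact hm
        subst hv0
        have hu : u = [] := by rw [mem_UY_iff] at hv; simpa using hv.symm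
        subst hu
        rw [langR, if_pos hm, mul_one]
        show phiStar φY [] ≤ if ([] : List X) = [] then (1 : L) else ⊥
        rw [if_pos rfl]
        exact phiStar_le_one φY []
      · rw [langR, if_neg hm, mul_bot']
        exact bot_le
    · intro u
      by_cases hu : u = []
      · subst hu
        refine ⟨{[]}, ?_, ?_⟩
        · intro v hv
          rw [Finset.mem_singleton] at hv
          subst hv
          refine ⟨by rw [mem_UY_iff]; rfl, ?_⟩
          rw [show toReg sc (FRE.eps : FRE X L) = 1 from rfl,
            RegularExpression.matches'_epsilon]
          exact Language.nil_mem_one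
        · show (if ([] : List X) = [] then (1:L) else ⊥) = _
          rw [Finset.sup_singleton, if_pos rfl, phiStar_nil]
      · refine ⟨∅, by simp, ?_⟩
        show (if u = [] then (1:L) else ⊥) = Finset.sup ∅ (phiStar φY)
        simp [if_neg hu]
  | char x =>
    intro _
    constructor
    · intro u v hv
      by_cases hm : v ∈ (toReg sc (FRE.char x : FRE X L)).matches'
      · have hv0 : v = [inl x] := by
          rw [show toReg sc (FRE.char x : FRE X L) = RegularExpression.char (inl x) from rfl,
            RegularExpression.matches'_char] at hm
          exact hm
        subst hv0
        have hu : u = [x] := by rw [mem_UY_iff] at hv; simpa using hv.symm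
        subst hu
        rw [langR, if_pos hm, mul_one]
        show phiStar φY [inl x] ≤ if ([x] : List X) = [x] then (1 : L) else ⊥
        rw [if_pos rfl]
        exact phiStar_le_one φY _
      · rw [langR, if_neg hm, mul_bot']
        exact bot_le
    · intro u
      by_cases hu : u = [x]
      · subst hu
        refine ⟨{[inl x]}, ?_, ?_⟩
        · intro v hv
          rw [Finset.mem_singleton] at hv
          subst hv
          refine ⟨by rw [mem_UY_iff]; simp, ?_⟩
          rw [show toReg sc (FRE.char x : FRE X L) = RegularExpression.char (inl x) from rfl,
            RegularExpression.matches'_char]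
          rfl
        · show (if ([x] : List X) = [x] then (1:L) else ⊥) = _
          rw [Finset.sup_singleton, if_pos rfl]
          simp [phiStar]
      · refine ⟨∅, by simp, ?_⟩
        show (if u = [x] then (1:L) else ⊥) = Finset.sup ∅ (phiStar φY)
        simp [if_neg hu]
  | @smul lam β f hβ ih =>
    intro hsub
    have hlam : φY (sc lam) = lam := hφY lam (hsub (by left; rfl))
    have hsub' : FRE.scalars β ⊆ K := fun l hl => hsub (by right; exact hl)
    obtain ⟨ihUB, ihFR⟩ := ih hsub'
    have hmul : (toReg sc (FRE.smul lam β)).matches'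
        = (RegularExpression.char (inr (sc lam))).matches' * (toReg sc β).matches' := by
      rw [show toReg sc (FRE.smul lam β)
        = RegularExpression.char (inr (sc lam)) * toReg sc β from rfl,
        RegularExpression.matches'_mul]
    constructor
    · intro u v hv
      by_cases hm : v ∈ (toReg sc (FRE.smul lam β)).matches'
      · have hm2 : v ∈ (RegularExpression.char (inr (sc lam))).matches' * (toReg sc β).matches' :=
          hmul ▸ hm
        obtain ⟨a, ha, b, hb, rfl⟩ := Language.mem_mul.1 hm2
        rw [RegularExpression.matches'_char] at ha
        replace ha : a = [inr (sc lam)] := ha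
        subst ha
        have hb' : b ∈ UY Y u := by
          rw [mem_UY_iff] at hv ⊢
          simpa [List.filterMap_cons, Sum.getLeft?_inr] using hv
        rw [langR, if_pos hm, mul_one]
        show phiStar φY ([inr (sc lam)] ++ b) ≤ lam * f u
        have : phiStar φY ([inr (sc lam)] ++ b) = lam * phiStar φY b := by
          rw [phiStar_append, phiStar_cons_inr, phiStar_nil, mul_one, hlam]
        rw [this]
        refine mul_le_mul_left'' ?_ lam
        have := ihUB u b hb'
        rwa [langR, if_pos hb, mul_one] at this
      · rw [langR, if_neg hm, mul_bot']
        exact bot_le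
    · intro u
      obtain ⟨V, hVmem, hVeq⟩ := ihFR u
      refine ⟨V.image fun v => inr (sc lam) :: v, ?_, ?_⟩
      · intro v hv
        simp only [Finset.mem_image] at hv
        obtain ⟨v', hv', rfl⟩ := hv
        obtain ⟨h1, h2⟩ := hVmem v' hv'
        refine ⟨cons_inr_mem_UY h1, ?_⟩
        rw [hmul]
        exact Language.append_mem_mul (a := [inr (sc lam)])
          (by rw [RegularExpression.matches'_char]; rfl) h2
      · rw [Finset.sup_image]
        have : (phiStar φY ∘ fun v => (inr (sc lam) : X ⊕ Y) :: v)
            = fun v => lam * phiStar φY v := by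
          funext v
          simp [Function.comp, phiStar_cons_inr, hlam]
        rw [this, ← mul_sup_distrib, ← hVeq]
  | @plus β γ f g hβ hγ ihβ ihγ =>
    intro hsub
    obtain ⟨ihUBβ, ihFRβ⟩ := ihβ fun l hl => hsub (Or.inl hl)
    obtain ⟨ihUBγ, ihFRγ⟩ := ihγ fun l hl => hsub (Or.inr hl)
    have hadd : (toReg sc (FRE.plus β γ)).matches'
        = (toReg sc β).matches' + (toReg sc γ).matches' := by
      rw [show toReg sc (FRE.plus β γ) = toReg sc β + toReg sc γ from rfl,
        RegularExpression.matches'_add]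
    constructor
    · intro u v hv
      by_cases hm : v ∈ (toReg sc (FRE.plus β γ)).matches'
      · rw [langR, if_pos hm, mul_one]
        rw [hadd] at hm
        rcases (Language.mem_add _ _ _).1 hm with hm' | hm'
        · refine le_sup_of_le_left ?_
          have := ihUBβ u v hv
          rwa [langR, if_pos hm', mul_one] at this
        · refine le_sup_of_le_right ?_
          have := ihUBγ u v hv
          rwa [langR, if_pos hm', mul_one] at this
      · rw [langR, if_neg hm, mul_bot']
        exact bot_le
    · intro u
      obtain ⟨V₁, hV₁, he₁⟩ := ihFRβ u
      obtain ⟨V₂, hV₂, he₂⟩ := ihFRγ u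
      refine ⟨V₁ ∪ V₂, ?_, ?_⟩
      · intro v hv
        rcases Finset.mem_union.1 hv with hv' | hv'
        · obtain ⟨h1, h2⟩ := hV₁ v hv'
          exact ⟨h1, by rw [hadd]; exact (Language.mem_add _ _ _).2 (Or.inl h2)⟩
        · obtain ⟨h1, h2⟩ := hV₂ v hv'
          exact ⟨h1, by rw [hadd]; exact (Language.mem_add _ _ _).2 (Or.inr h2)⟩
      · rw [Finset.sup_union, ← he₁, ← he₂]
  | @comp β γ f g hβ hγ ihβ ihγ =>
    intro hsub
    obtain ⟨ihUBβ, ihFRβ⟩ := ihβ fun l hl => hsub (Or.inl hl)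
    obtain ⟨ihUBγ, ihFRγ⟩ := ihγ fun l hl => hsub (Or.inr hl)
    have hmul : (toReg sc (FRE.comp β γ)).matches'
        = (toReg sc β).matches' * (toReg sc γ).matches' := by
      rw [show toReg sc (FRE.comp β γ) = toReg sc β * toReg sc γ from rfl,
        RegularExpression.matches'_mul]
    constructor
    · intro u v hv
      by_cases hm : v ∈ (toReg sc (FRE.comp β γ)).matches'
      · have hm2 : v ∈ (toReg sc β).matches' * (toReg sc γ).matches' := hmul ▸ hm
        rw [langR, if_pos hm, mul_one]
        obtain ⟨v₁, h1, v₂, h2, rfl⟩ := Language.mem_mul.1 hm2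
        have hu : u = v₁.filterMap (fun z => z.getLeft?) ++ v₂.filterMap (fun z => z.getLeft?) := by
          rw [mem_UY_iff, List.filterMap_append] at hv
          exact hv.symm
        subst hu
        set u₁ := v₁.filterMap (fun z => z.getLeft?)
        set u₂ := v₂.filterMap (fun z => z.getLeft?)
        have hb1 : phiStar φY v₁ ≤ f u₁ := by
          have := ihUBβ u₁ v₁ (by rw [mem_UY_iff])
          rwa [langR, if_pos h1, mul_one] at this
        have hb2 : phiStar φY v₂ ≤ g u₂ := by
          have := ihUBγ u₂ v₂ (by rw [mem_UY_iff])
          rwa [langR, if_pos h2, mul_one] at this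
        rw [phiStar_append]
        refine le_trans (mul_le_mul'' hb1 hb2) ?_
        have hterm : f ((u₁ ++ u₂).take u₁.length) * g ((u₁ ++ u₂).drop u₁.length)
            ≤ fconcat f g (u₁ ++ u₂) :=
          Finset.le_sup (f := fun i => f ((u₁ ++ u₂).take i) * g ((u₁ ++ u₂).drop i))
            (Finset.mem_range.2 (by simp))
        rwa [List.take_left, List.drop_left] at hterm
      · rw [langR, if_neg hm, mul_bot']
        exact bot_le
    · intro u
      obtain ⟨V, hVmem, hVeq⟩ := finrep_fconcat ihFRβ ihFRγ u
      refine ⟨V, ?_, hVeq⟩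
      intro v hv
      obtain ⟨h1, v₁, v₂, rfl, hp1, hp2⟩ := hVmem v hv
      exact ⟨h1, by rw [hmul]; exact Language.append_mem_mul hp1 hp2⟩
  | @star β f g hβ hglub ihβ =>
    intro hsub
    obtain ⟨ihUB, ihFR⟩ := ihβ hsub
    have hstar : (toReg sc (FRE.star β)).matches' = (toReg sc β).matches'∗ := by
      rw [show toReg sc (FRE.star β) = (toReg sc β).star from rfl,
        RegularExpression.matches'_star]
    have gfin : ∀ u : List X, g u = (Finset.range (u.length + 1)).sup fun k => fpow f k u :=
      fun u => (hglub u).unique (isLUB_fpow_finite f u)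
    constructor
    · intro u v hv
      by_cases hm : v ∈ (toReg sc (FRE.star β)).matches'
      · have hm2 : v ∈ (toReg sc β).matches'∗ := hstar ▸ hm
        rw [langR, if_pos hm, mul_one]
        clear hm
        obtain ⟨S, rfl, hS⟩ := Language.mem_kstar.1 hm2
        clear hm2
        induction S using List.reverseRecOn generalizing u with
        | nil =>
          have hu : u = [] := by rw [mem_UY_iff] at hv; simpa using hv.symm
          subst hu
          have h1 : fpow f 0 ([] : List X) ≤ g [] := (hglub []).1 ⟨0, rfl⟩
          rw [show fpow f 0 ([] : List X) = 1 from by rw [fpow]; simp] at h1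
          exact le_trans (phiStar_le_one φY _) h1
        | append_singleton S p ihS =>
          have hflat : (S ++ [p]).flatten = S.flatten ++ p := by simp
          rw [hflat] at hv ⊢
          have hu : u = S.flatten.filterMap (fun z => z.getLeft?)
              ++ p.filterMap (fun z => z.getLeft?) := by
            rw [mem_UY_iff, List.filterMap_append] at hv
            exact hv.symm
          subst hu
          set u₁ := S.flatten.filterMap (fun z => z.getLeft?)
          set u₂ := p.filterMap (fun z => z.getLeft?)
          have hb1 : phiStar φY S.flatten ≤ g u₁ :=
            ihS u₁ (fun y hy => hS y (List.mem_append.2 (Or.inl hy))) (by rw [mem_UY_iff])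
          have hb2 : phiStar φY p ≤ f u₂ := by
            have := ihUB u₂ p (by rw [mem_UY_iff])
            rwa [langR, if_pos (hS p (List.mem_append.2 (Or.inr (List.mem_singleton.2 rfl)))),
              mul_one] at this
          rw [phiStar_append]
          refine le_trans (mul_le_mul'' hb1 hb2) ?_
          rw [gfin u₁, sup_mul_distrib]
          refine Finset.sup_le fun k hk => ?_
          have hterm : fpow f k ((u₁ ++ u₂).take u₁.length) * f ((u₁ ++ u₂).drop u₁.length)
              ≤ fpow f (k + 1) (u₁ ++ u₂) :=
            Finset.le_sup (f := fun i => fpow f k ((u₁ ++ u₂).take i) * f ((u₁ ++ u₂).drop i))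
              (Finset.mem_range.2 (by simp))
          rw [List.take_left, List.drop_left] at hterm
          exact le_trans hterm ((hglub (u₁ ++ u₂)).1 ⟨k + 1, rfl⟩)
      · rw [langR, if_neg hm, mul_bot']
        exact bot_le
    · have fpowFR : ∀ (k : ℕ) (u : List X), ∃ V : Finset (List (X ⊕ Y)),
          (∀ v ∈ V, v ∈ UY Y u ∧ v ∈ (toReg sc β).matches'∗) ∧
          fpow f k u = V.sup (phiStar φY) := by
        intro k
        induction k with
        | zero =>
          intro u
          by_cases hu : u = []
          · subst hu
            refine ⟨{[]}, ?_, ?_⟩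
            · intro v hv
              rw [Finset.mem_singleton] at hv
              subst hv
              exact ⟨by rw [mem_UY_iff]; rfl, Language.nil_mem_kstar _⟩
            · rw [Finset.sup_singleton, phiStar_nil, fpow]
              simp
          · exact ⟨∅, by simp, by rw [fpow]; simp [if_neg hu]⟩
        | succ k ihk =>
          intro u
          obtain ⟨V, hVmem, hVeq⟩ := finrep_fconcat ihk ihFR u
          refine ⟨V, ?_, hVeq⟩
          intro v hv
          obtain ⟨h1, v₁, v₂, rfl, hp1, hp2⟩ := hVmem v hv
          exact ⟨h1, kstar_append hp1 hp2⟩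
      intro u
      have : ∀ k ∈ Finset.range (u.length + 1), ∃ V : Finset (List (X ⊕ Y)),
          (∀ v ∈ V, v ∈ UY Y u ∧ v ∈ (toReg sc β).matches'∗) ∧
          fpow f k u = V.sup (phiStar φY) := fun k _ => fpowFR k u
      choose Vk hVk hVkeq using this
      refine ⟨(Finset.range (u.length + 1)).attach.biUnion fun k => Vk k.1 k.2, ?_, ?_⟩
      · intro v hv
        simp only [Finset.mem_biUnion, Finset.mem_attach, true_and] at hv
        obtain ⟨⟨k, hk⟩, hv'⟩ := hv
        obtain ⟨h1, h2⟩ := hVk k hk v hv'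
        exact ⟨h1, by rw [hstar]; exact h2⟩
      · rw [gfin u, Finset.sup_biUnion]
        rw [← Finset.sup_attach]
        congr 1; funext k
        exact hVkeq k.1 k.2
  end thm1
end Pf
namespace Pf
open Fz Sum

variable {L : Type*} [IntegralLMonoid L]

set_option linter.unusedSectionVars false
set_option maxHeartbeats 1000000

section bridge
variable {X Y A : Type*} [Fintype X] [Fintype Y] [Fintype A]
variable {φY : Y → L} {δ : A → X ⊕ Y → A → L} {τ : A → L}
variable {δα : A → X → A → L} {τα : A → L}

theorem rearr2 {p₁ p₂ D₁ D₂ t : L} (h₁ : Crisp D₁) :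
    (p₁ * p₂) * ((D₁ * D₂) * t) = (p₁ * D₁) * (p₂ * (D₂ * t)) := by
  rcases h₁ with h | h <;> subst h <;> simp [mul_bot', bot_mul', mul_assoc]

theorem rearr3 {lam p₁ p₂ p₃ D₁ e D₂ D₃ t : L}
    (h₁ : Crisp D₁) (he : Crisp e) (h₂ : Crisp D₂) :
    (lam * (((p₁ * D₁) * e) * (p₂ * D₂))) * (p₃ * (D₃ * t))
      = lam * ((p₁ * (p₂ * p₃)) * ((D₁ * (e * (D₂ * D₃))) * t)) := by
  rcases h₁ with h | h <;> rcases he with h' | h' <;> rcases h₂ with h'' | h'' <;>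
    subst h h' h'' <;> simp [mul_bot', bot_mul', mul_assoc]

theorem prod_sup_le {ι κ : Type*} (s : Finset ι) (t : Finset κ) (f : ι → L) (g : κ → L)
    (lam e S m : L) (h : ∀ i ∈ s, ∀ j ∈ t, (lam * (f i * e * g j)) * S ≤ m) :
    (lam * (s.sup f * e * t.sup g)) * S ≤ m := by
  have hexp : s.sup f * e * t.sup g = s.sup fun i => t.sup fun j => f i * e * g j := by
    rw [sup_mul_distrib, sup_mul_distrib]
    simp only [mul_sup_distrib]
  rw [hexp, mul_sup_distrib, sup_mul_distrib]
  refine Finset.sup_le fun i hi => ?_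
  rw [mul_sup_distrib, sup_mul_distrib]
  refine Finset.sup_le fun j hj => ?_
  exact h i hi j hj

theorem dstar_chain_ge (d c₁ c₂ c b : A) (v₁ v₂ v₃ : List (X ⊕ Y)) (x : X) :
    dstar δ d v₁ c₁ * (δ c₁ (inl x) c₂ * (dstar δ c₂ v₂ c * dstar δ c v₃ b))
      ≤ dstar δ d (v₁ ++ inl x :: (v₂ ++ v₃)) b := by
  have h3 : dstar δ c₂ v₂ c * dstar δ c v₃ b ≤ dstar δ c₂ (v₂ ++ v₃) b := by
    rw [dstar_append]
    exact Finset.le_sup (f := fun c' => dstar δ c₂ v₂ c' * dstar δ c' v₃ b) (Finset.mem_univ c)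
  have h2 : δ c₁ (inl x) c₂ * dstar δ c₂ (v₂ ++ v₃) b ≤ dstar δ c₁ (inl x :: (v₂ ++ v₃)) b := by
    rw [dstar_cons]
    exact Finset.le_sup (f := fun c' => δ c₁ (inl x) c' * dstar δ c' (v₂ ++ v₃) b)
      (Finset.mem_univ c₂)
  have h1 : dstar δ d v₁ c₁ * dstar δ c₁ (inl x :: (v₂ ++ v₃)) b
      ≤ dstar δ d (v₁ ++ inl x :: (v₂ ++ v₃)) b := by
    rw [dstar_append]
    exact Finset.le_sup (f := fun c' => dstar δ d v₁ c' * dstar δ c' (inl x :: (v₂ ++ v₃)) b)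
      (Finset.mem_univ c₁)
  calc dstar δ d v₁ c₁ * (δ c₁ (inl x) c₂ * (dstar δ c₂ v₂ c * dstar δ c v₃ b))
      ≤ dstar δ d v₁ c₁ * (δ c₁ (inl x) c₂ * dstar δ c₂ (v₂ ++ v₃) b) :=
        mul_le_mul_left'' (mul_le_mul_left'' h3 _) _
  _ ≤ dstar δ d v₁ c₁ * dstar δ c₁ (inl x :: (v₂ ++ v₃)) b := mul_le_mul_left'' h2 _
  _ ≤ _ := h1

theorem lang_nil_eq (τα : A → L) (a : A) :
    (Finset.univ.sup fun b => dstar δα a ([] : List X) b * τα b) = τα a := by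
  have : (fun b => dstar δα a ([] : List X) b * τα b)
      = fun b => (if a = b then (1 : L) else ⊥) * τα b := by
    funext b; rw [dstar_nil]
  rw [this, sup_ite_unit]

theorem lower_le (hδc : ∀ a z b, Crisp (δ a z b))
    (hδα : ∀ (a : A) (x : X) (b : A), IsLUB (dset φY δ a x b) (δα a x b))
    (hτα : ∀ a : A, IsLUB (tset φY δ τ a) (τα a)) :
    ∀ (u : List X) (a : A) (v : List (X ⊕ Y)), v ∈ UY Y u → ∀ b : A,
      phiStar φY v * (dstar δ a v b * τ b)
        ≤ Finset.univ.sup fun b' => dstar δα a u b' * τα b' := by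
  intro u
  induction u with
  | nil =>
    intro a v hv b
    obtain ⟨w, rfl⟩ := mem_UY_nil_iff.1 hv
    rw [lang_nil_eq]
    have h1 : phiStar φY (w.map inr : List (X ⊕ Y)) * (dstar δ a (w.map inr) b * τ b)
        ≤ Finset.univ.sup fun b' =>
            phiStar φY (w.map inr : List (X ⊕ Y)) * dstar δ a (w.map inr) b' * τ b' := by
      rw [← mul_assoc]
      exact Finset.le_sup (f := fun b' =>
        phiStar φY (w.map inr : List (X ⊕ Y)) * dstar δ a (w.map inr) b' * τ b')
        (Finset.mem_univ b)
    exact h1.trans ((hτα a).1 ⟨w, rfl⟩)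
  | cons x u' ih =>
    intro a v hv b
    obtain ⟨w, v', rfl, hv'⟩ := mem_UY_cons_decomp hv
    set v₁ : List (X ⊕ Y) := w.map inr with hv₁
    have hsplit : v₁ ++ inl x :: v' = (v₁ ++ [inl x]) ++ v' := by simp
    rw [hsplit]
    rw [dstar_append]
    have hphi : phiStar φY ((v₁ ++ [inl x]) ++ v') = phiStar φY v₁ * phiStar φY v' := by
      rw [phiStar_append, phiStar_append, phiStar_cons_inl, phiStar_nil, mul_one]
    rw [hphi, sup_mul_distrib, mul_sup_distrib]
    refine Finset.sup_le fun c _ => ?_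
    have hcrisp : Crisp (dstar δ a (v₁ ++ [inl x]) c) := dstar_crisp δ hδc a c _
    have hphi1 : phiStar φY (v₁ ++ [inl x]) = phiStar φY v₁ := by
      rw [phiStar_append, phiStar_cons_inl, phiStar_nil, mul_one]
    have hre : (phiStar φY v₁ * phiStar φY v')
          * (dstar δ a (v₁ ++ [inl x]) c * dstar δ c v' b * τ b)
        = (phiStar φY v₁ * dstar δ a (v₁ ++ [inl x]) c)
          * (phiStar φY v' * (dstar δ c v' b * τ b)) := rearr2 hcrisp
    rw [hre]
    have hd1 : phiStar φY v₁ * dstar δ a (v₁ ++ [inl x]) c ≤ δα a x c := by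
      refine (hδα a x c).1 ⟨v₁ ++ [inl x], ?_, by rw [hphi1]⟩
      have : ([inl x] : List (X ⊕ Y)) ∈ UY Y [x] :=
        cons_inl_mem_UY (x := x) (u := []) (v := []) (by rw [mem_UY_iff]; rfl)
      exact mem_UY_append (u₁ := []) (u₂ := [x]) (map_inr_mem_UY_nil w) this
    have hd2 : phiStar φY v' * (dstar δ c v' b * τ b)
        ≤ Finset.univ.sup fun b' => dstar δα c u' b' * τα b' := ih c v' hv' b
    refine (mul_le_mul'' hd1 hd2).trans ?_
    rw [mul_sup_distrib]
    refine Finset.sup_le fun b' _ => ?_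
    have hstep : δα a x c * dstar δα c u' b' ≤ dstar δα a (x :: u') b' := by
      rw [dstar_cons]
      exact Finset.le_sup (f := fun c' => δα a x c' * dstar δα c' u' b') (Finset.mem_univ c)
    calc δα a x c * (dstar δα c u' b' * τα b')
        = (δα a x c * dstar δα c u' b') * τα b' := (mul_assoc _ _ _).symm
    _ ≤ dstar δα a (x :: u') b' * τα b' := mul_le_mul_right'' hstep _
    _ ≤ _ := Finset.le_sup (f := fun b'' => dstar δα a (x :: u') b'' * τα b'')
        (Finset.mem_univ b')

theorem upper_le (hδc : ∀ a z b, Crisp (δ a z b)) (hnt : (1 : L) ≠ ⊥)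
    (hδα : ∀ (a : A) (x : X) (b : A), IsLUB (dset φY δ a x b) (δα a x b))
    (hτα : ∀ a : A, IsLUB (tset φY δ τ a) (τα a)) :
    ∀ (u : List X) (d : A) (lam m : L),
      (∀ v ∈ UY Y u, ∀ b : A, lam * (phiStar φY v * (dstar δ d v b * τ b)) ≤ m) →
      lam * (Finset.univ.sup fun b => dstar δα d u b * τα b) ≤ m := by
  intro u
  induction u with
  | nil =>
    intro d lam m hm
    rw [lang_nil_eq]
    have hταd : τα d = taulub φY δ τ d := (hτα d).unique (isLUB_tset hδc hnt d)
    rw [hταd, taulub, mul_sup_distrib]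
    refine Finset.sup_le fun b _ => ?_
    rw [Tlub, sup_mul_distrib, mul_sup_distrib]
    refine Finset.sup_le fun k _ => ?_
    rw [sup_mul_distrib, mul_sup_distrib]
    refine Finset.sup_le fun p _ => ?_
    by_cases hp : List.ofFn p ∈ UY Y ([] : List X)
    · rw [if_pos hp]
      have := hm (List.ofFn p) hp b
      rw [Tval, mul_assoc]
      exact this
    · rw [if_neg hp, bot_mul', mul_bot']
      exact bot_le
  | cons x u' ih =>
    intro d lam m hm
    have hrw : (Finset.univ.sup fun b => dstar δα d (x :: u') b * τα b)
        = Finset.univ.sup fun c => δα d x c *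
            Finset.univ.sup fun b => dstar δα c u' b * τα b := by
      simp only [dstar_cons, sup_mul_distrib, mul_sup_distrib]
      rw [Finset.sup_comm]
      congr 1; funext c
      congr 1; funext b
      rw [mul_assoc]
    rw [hrw, mul_sup_distrib]
    refine Finset.sup_le fun c _ => ?_
    have hδαd : δα d x c = Dlub φY δ d x c := (hδα d x c).unique (isLUB_dset hδc hnt d x c)
    rw [← mul_assoc, hδαd, Dlub, mul_sup_distrib]
    refine Finset.sup_le fun b _ => ?_
    rw [mul_sup_distrib, sup_mul_distrib]
    refine Finset.sup_le fun c₁ _ => ?_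
    rw [mul_sup_distrib, sup_mul_distrib]
    refine Finset.sup_le fun c₂ _ => ?_
    simp only [Tlub]
    refine prod_sup_le _ _ _ _ _ _ _ _ fun k _ k' _ => ?_
    refine prod_sup_le _ _ _ _ _ _ _ _ fun p _ p' _ => ?_
    by_cases hp : List.ofFn p ∈ UY Y ([] : List X)
    · by_cases hp' : List.ofFn p' ∈ UY Y ([] : List X)
      · rw [if_pos hp, if_pos hp']
        set v₁ := List.ofFn p with hv₁def
        set v₂ := List.ofFn p' with hv₂def
        have hmono : (lam * (Tval φY δ d c₁ v₁ * δ c₁ (inl x) c₂ * Tval φY δ c₂ c v₂))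
              * (dstar δα c u' b * τα b)
            ≤ (lam * (Tval φY δ d c₁ v₁ * δ c₁ (inl x) c₂ * Tval φY δ c₂ c v₂))
              * (Finset.univ.sup fun b' => dstar δα c u' b' * τα b') :=
          mul_le_mul_left'' (Finset.le_sup (f := fun b' => dstar δα c u' b' * τα b')
            (Finset.mem_univ b)) _
        refine hmono.trans ?_
        -- apply the induction hypothesis with the accumulated scalar
        refine ih c (lam * (Tval φY δ d c₁ v₁ * δ c₁ (inl x) c₂ * Tval φY δ c₂ c v₂)) m ?_
        intro v₃ hv₃ b
        have hmem : v₁ ++ inl x :: (v₂ ++ v₃) ∈ UY Y (x :: u') := by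
          have h23 : v₂ ++ v₃ ∈ UY Y ([] ++ u') := mem_UY_append hp' hv₃
          rw [List.nil_append] at h23
          exact mem_UY_append (u₁ := []) (u₂ := x :: u') hp (cons_inl_mem_UY h23)
        have hphi : phiStar φY (v₁ ++ inl x :: (v₂ ++ v₃))
            = phiStar φY v₁ * (phiStar φY v₂ * phiStar φY v₃) := by
          rw [phiStar_append, phiStar_cons_inl, phiStar_append]
        have heq := rearr3 (lam := lam) (p₁ := phiStar φY v₁) (p₂ := phiStar φY v₂)
          (p₃ := phiStar φY v₃) (D₃ := dstar δ c v₃ b) (t := τ b)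
          (dstar_crisp δ hδc d c₁ v₁) (hδc c₁ (inl x) c₂) (dstar_crisp δ hδc c₂ c v₂)
        rw [Tval, Tval, heq]
        have hchain := dstar_chain_ge (δ := δ) d c₁ c₂ c b v₁ v₂ v₃ x
        have h2 := hm _ hmem b
        rw [hphi] at h2
        exact le_trans (mul_le_mul_left'' (mul_le_mul_left''
          (mul_le_mul_right'' hchain (τ b)) _) lam) h2
      · rw [if_pos hp, if_neg hp']
        simp [mul_bot', bot_mul']
    · rw [if_neg hp]
      simp [mul_bot', bot_mul']

end bridge
end Pf
open Fz in
/-- **Theorem 2 of the paper.** Let `L` be an integral ℓ-monoid, `α` a fuzzy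
regular expression over a finite alphabet `X` with associated alphabet `Y`, and
`A = (A, X∪Y, δ, a₀, τ)` an arbitrary nondeterministic finite automaton recognizing the
language `‖α_R‖`.  Then the least upper bounds defining the fuzzy automaton `A_α`
(its fuzzy transition relation `δα` and its fuzzy set of terminal states `τα`) exist, so
`A_α` is well defined, and `A_α` recognizes the fuzzy language `‖α‖`:
`L(A_α)(u) = ‖α‖(u)` for every `u ∈ X*`. -/
theorem stmt6 {L X Y A : Type*} [IntegralLMonoid L] [Fintype X] [Fintype Y] [Fintype A]
    (α : FRE X L) (sc : L → Y) (φY : Y → L)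
    (hsc : Set.BijOn sc α.scalars (Set.univ : Set Y))
    (hφY : ∀ l ∈ α.scalars, φY (sc l) = l)
    (δ : A → X ⊕ Y → A → L) (a0 : A) (τ : A → L)
    (hδ : ∀ a z b, δ a z b = 1 ∨ δ a z b = ⊥)
    (hτ : ∀ a, τ a = 1 ∨ τ a = ⊥)
    (hrec : ∀ v : List (X ⊕ Y), lang δ a0 τ v = langR sc α v)
    (f : List X → L) (hf : IsNorm α f) :
    ((∀ (a : A) (x : X) (b : A), ∃ s : L, IsLUB (dset φY δ a x b) s) ∧
      (∀ a : A, ∃ s : L, IsLUB (tset φY δ τ a) s)) ∧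
    (∀ (δα : A → X → A → L) (τα : A → L),
      (∀ (a : A) (x : X) (b : A), IsLUB (dset φY δ a x b) (δα a x b)) →
      (∀ a : A, IsLUB (tset φY δ τ a) (τα a)) →
      ∀ u : List X, lang δα a0 τα u = f u) := by
  classical
  by_cases htriv : (1 : L) = ⊥
  · -- degenerate case: the ℓ-monoid is trivial
    have hall : ∀ l : L, l = ⊥ := fun l => le_bot_iff.1 (by
      have h1 : l ≤ (1 : L) := Pf.le_one' l
      rwa [htriv] at h1)
    refine ⟨⟨fun a x b => ⟨⊥, fun l hl => (hall l).le, fun mm _ => bot_le⟩,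
        fun a => ⟨⊥, fun l hl => (hall l).le, fun mm _ => bot_le⟩⟩, ?_⟩
    intro δα τα _ _ u
    rw [hall (lang δα a0 τα u), hall (f u)]
  · have hnt : (1 : L) ≠ ⊥ := htriv
    have hδc : ∀ a z b, Pf.Crisp (δ a z b) := hδ
    refine ⟨⟨fun a x b => ⟨_, Pf.isLUB_dset hδc hnt a x b⟩,
        fun a => ⟨_, Pf.isLUB_tset hδc hnt a⟩⟩, ?_⟩
    intro δα τα hδα hτα u
    obtain ⟨h1UB, h1FR⟩ :=
      Pf.thm1 (K := FRE.scalars α) hφY hf (fun l hl => hl)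
    apply le_antisymm
    · -- `L(A_α)(u) ≤ ‖α‖(u)`
      have hup : 1 * (Finset.univ.sup fun b => dstar δα a0 u b * τα b) ≤ f u := by
        refine Pf.upper_le hδc hnt hδα hτα u a0 1 (f u) ?_
        intro v hv b
        rw [one_mul]
        have h1 : phiStar φY v * (dstar δ a0 v b * τ b)
            ≤ phiStar φY v * lang δ a0 τ v := by
          refine Pf.mul_le_mul_left'' ?_ _
          exact Finset.le_sup (f := fun b' => dstar δ a0 v b' * τ b') (Finset.mem_univ b)
        refine h1.trans ?_
        rw [hrec v]
        exact h1UB u v hv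
      calc lang δα a0 τα u
          = 1 * (Finset.univ.sup fun b => dstar δα a0 u b * τα b) := (one_mul _).symm
      _ ≤ f u := hup
    · -- `‖α‖(u) ≤ L(A_α)(u)`
      obtain ⟨V, hVmem, hVeq⟩ := h1FR u
      rw [hVeq]
      refine Finset.sup_le fun v hv => ?_
      obtain ⟨hvu, hvm⟩ := hVmem v hv
      have hval : phiStar φY v = phiStar φY v * lang δ a0 τ v := by
        rw [hrec v, langR, if_pos hvm, mul_one]
      rw [hval]
      have hlang : lang δ a0 τ v = Finset.univ.sup fun b => dstar δ a0 v b * τ b := rfl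
      rw [hlang, Pf.mul_sup_distrib]
      refine Finset.sup_le fun b _ => ?_
      exact Pf.lower_le hδc hδα hτα u a0 v hvu b
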